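/- Every finite 2-group of order at most 128 whose abelianization is isomorphic to (ℤ/4ℤ) × (ℤ/4ℤ) is metabelian, and there exists a finite 2-group of order 256 whose abelianization is isomorphic to (ℤ/4ℤ) × (ℤ/4ℤ) and whose derived length equals 3. In other words, the minimal order of a non-metabelian finite 2-group with abelianization (ℤ/4ℤ) × (ℤ/4ℤ) is 256. -/

import Mathlib

open Subgroup hiding lowerCentralSeries_zero lowerCentralSeries_succ lowerCentralSeries_antitone lowerCentralSeries_one derived_le_lower_central nilpotent_iff_lowerCentralSeries
open Pointwise
open scoped commutatorElement

local notation "lowerCentralSeries" G:max n:max => Subgroup.lowerCentralSeries (⊤ : Subgroup G) n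

private theorem lcs_succ' {G : Type} [Group G] (n : ℕ) :
    lowerCentralSeries G (n + 1) = ⁅lowerCentralSeries G n, ⊤⁆ := rfl

private theorem lcs_comm (G : Type) [Group G] :
    ∀ n m : ℕ, ⁅lowerCentralSeries G m, lowerCentralSeries G n⁆ ≤
      lowerCentralSeries G (m + n + 1) := by
  intro n
  induction n with
  | zero =>
    intro m
    rw [lowerCentralSeries_zero]
    exact le_of_eq (lcs_succ' m).symm
  | succ n ih =>
    intro m
    set Z := lowerCentralSeries G (m + (n + 1) + 1) with hZ
    let π := QuotientGroup.mk' Z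
    have hπ : Function.Surjective π := QuotientGroup.mk'_surjective Z
    have hZker : Z ≤ π.ker := le_of_eq (QuotientGroup.ker_mk' Z).symm
    have hmapZ : ∀ k : ℕ, m + (n+1) + 1 ≤ k → Subgroup.map π (lowerCentralSeries G k) = ⊥ := by
      intro k hk
      rw [Subgroup.map_eq_bot_iff]
      exact (lowerCentralSeries_antitone (⊤ : Subgroup G) hk).trans hZker
    suffices hbot : Subgroup.map π ⁅lowerCentralSeries G m, lowerCentralSeries G (n+1)⁆ = ⊥ by
      rw [Subgroup.map_eq_bot_iff, QuotientGroup.ker_mk'] at hbot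
      exact hbot
    · rw [Subgroup.map_commutator, lcs_succ', Subgroup.map_commutator,
        Subgroup.map_top_of_surjective _ hπ, Subgroup.commutator_comm]
      apply Subgroup.commutator_commutator_eq_bot_of_rotate
      · -- ⁅⁅⊤, map π (L m)⁆, map π (L n)⁆ = ⊥
        rw [Subgroup.commutator_comm (⊤ : Subgroup (G ⧸ Z))]
        rw [← Subgroup.map_top_of_surjective π hπ, ← Subgroup.map_commutator,
          ← lcs_succ', ← Subgroup.map_commutator]
        rw [← le_bot_iff]
        calc Subgroup.map π ⁅lowerCentralSeries G (m+1), lowerCentralSeries G n⁆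
            ≤ Subgroup.map π (lowerCentralSeries G (m + 1 + n + 1)) :=
              Subgroup.map_mono (ih (m+1))
          _ = ⊥ := hmapZ _ (by omega)
      · rw [← Subgroup.map_commutator, ← Subgroup.map_top_of_surjective π hπ,
          ← Subgroup.map_commutator]
        rw [← le_bot_iff]
        calc Subgroup.map π ⁅⁅lowerCentralSeries G m, lowerCentralSeries G n⁆, ⊤⁆
            ≤ Subgroup.map π ⁅lowerCentralSeries G (m + n + 1), ⊤⁆ :=
              Subgroup.map_mono (Subgroup.commutator_mono (ih m) le_rfl)
          _ = Subgroup.map π (lowerCentralSeries G (m + n + 1 + 1)) := by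
              rw [← lcs_succ']
          _ = ⊥ := hmapZ _ (by omega)

private theorem genMult4 :
    ∀ z : Multiplicative (ZMod 4 × ZMod 4), ∃ i j : Fin 4,
      z = (Multiplicative.ofAdd ((1 : ZMod 4), (0 : ZMod 4))) ^ (i : ℕ) *
          (Multiplicative.ofAdd ((0 : ZMod 4), (1 : ZMod 4))) ^ (j : ℕ) := by
  decide

private theorem keybound (G : Type) [Group G] [Finite G]
    (hcard : ∃ n : ℕ, Nat.card G = 2 ^ n)
    (hab : Nonempty (Abelianization G ≃* Multiplicative (ZMod 4 × ZMod 4)))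
    (hds : derivedSeries G 2 ≠ ⊥) : 256 ≤ Nat.card G := by
  obtain ⟨nn, hnn⟩ := hcard
  obtain ⟨e⟩ := hab
  have hnil : Group.IsNilpotent G := (IsPGroup.of_card hnn).isNilpotent
  -- generators a b
  have hf : Function.Surjective (Abelianization.of (G := G)) := fun y =>
    Quotient.exists_rep y
  obtain ⟨a, ha⟩ := hf (e.symm (Multiplicative.ofAdd ((1 : ZMod 4), (0 : ZMod 4))))
  obtain ⟨b, hb⟩ := hf (e.symm (Multiplicative.ofAdd ((0 : ZMod 4), (1 : ZMod 4))))
  have hgen : Subgroup.closure {a, b} ⊔ commutator G = ⊤ := by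
    have hker : (Abelianization.of (G := G)).ker = commutator G :=
      QuotientGroup.ker_mk' (commutator G)
    have hmap : Subgroup.map (Abelianization.of (G := G)) (Subgroup.closure {a, b}) = ⊤ := by
      rw [MonoidHom.map_closure, Set.image_pair, ha, hb]
      rw [eq_top_iff]
      intro z _
      obtain ⟨i, j, hz⟩ := genMult4 (e z)
      have : z = e.symm (Multiplicative.ofAdd ((1 : ZMod 4), (0 : ZMod 4))) ^ (i : ℕ) *
          e.symm (Multiplicative.ofAdd ((0 : ZMod 4), (1 : ZMod 4))) ^ (j : ℕ) := by
        apply e.injective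
        rw [map_mul, map_pow, map_pow, MulEquiv.apply_symm_apply, MulEquiv.apply_symm_apply]
        exact hz
      rw [this]
      exact mul_mem (pow_mem (Subgroup.subset_closure (by simp)) _)
        (pow_mem (Subgroup.subset_closure (by simp)) _)
    have := Subgroup.comap_map_eq (Abelianization.of (G := G)) (Subgroup.closure {a, b})
    rw [hmap, Subgroup.comap_top, hker] at this
    exact this.symm
  set c := ⁅a, b⁆ with hc
  set H : Subgroup G := Subgroup.zpowers c ⊔ lowerCentralSeries G 2 with hH
  have hcL1 : c ∈ lowerCentralSeries G 1 := by
    rw [lowerCentralSeries_one, _root_.commutator_def]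
    exact Subgroup.commutator_mem_commutator (mem_top a) (mem_top b)
  have hL2H : lowerCentralSeries G 2 ≤ H := le_sup_right
  have hcH : c ∈ H := (le_sup_left : Subgroup.zpowers c ≤ H) (Subgroup.mem_zpowers c)
  have hcomm_to_L2 : ∀ (w : G), w ∈ lowerCentralSeries G 1 → ∀ z : G,
      ⁅w, z⁆ ∈ lowerCentralSeries G 2 := by
    intro w hw z
    rw [show (2 : ℕ) = 1 + 1 from rfl, lcs_succ']
    exact Subgroup.commutator_mem_commutator hw (mem_top z)
  have hHn : H.Normal := by
    constructor
    intro x hx g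
    have hx' : x ∈ (Subgroup.zpowers c : Set G) * (lowerCentralSeries G 2 : Set G) := by
      rw [← Subgroup.mul_normal]
      exact hx
    obtain ⟨y, hy, u, hu, rfl⟩ := hx'
    obtain ⟨k, rfl⟩ := Subgroup.mem_zpowers_iff.mp hy
    have hgc : g * c * g⁻¹ ∈ H := by
      have hrw : g * c * g⁻¹ = ⁅g, c⁆ * c := by group
      rw [hrw]
      apply H.mul_mem _ hcH
      apply hL2H
      have : ⁅g, c⁆ = ⁅c, g⁆⁻¹ := (commutatorElement_inv c g).symm
      rw [this]
      exact (lowerCentralSeries G 2).inv_mem (hcomm_to_L2 c hcL1 g)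
    have hrw : g * (c ^ k * u) * g⁻¹ = (g * c * g⁻¹) ^ k * (g * u * g⁻¹) := by
      rw [conj_zpow]
      group
    rw [hrw]
    exact H.mul_mem (H.zpow_mem hgc k)
      (hL2H (Subgroup.Normal.conj_mem inferInstance u hu g))
  have hG'H : lowerCentralSeries G 1 ≤ H := by
    rw [lowerCentralSeries_one, _root_.commutator_def, Subgroup.commutator_le]
    intro x _ y _
    haveI := hHn
    let π := QuotientGroup.mk' H
    have hker : π.ker = H := QuotientGroup.ker_mk' H
    have hmemH : ∀ w : G, π w = 1 → w ∈ H := by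
      intro w hw
      rw [← hker]
      exact hw
    have hcommH : ∀ w z : G, Commute (π w) (π z) → ⁅w, z⁆ ∈ H := by
      intro w z hwz
      apply hmemH
      rw [map_commutatorElement]
      exact commutatorElement_eq_one_iff_commute.mpr hwz
    have hcentral : ∀ w : G, w ∈ lowerCentralSeries G 1 → ∀ z : G,
        Commute (π w) (π z) := by
      intro w hw z
      rw [← commutatorElement_eq_one_iff_commute, ← map_commutatorElement]
      have : ⁅w, z⁆ ∈ H := hL2H (hcomm_to_L2 w hw z)
      rwa [← hker, MonoidHom.mem_ker] at this
    have hπc : Commute (π a) (π b) := by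
      rw [← commutatorElement_eq_one_iff_commute, ← map_commutatorElement]
      have : c ∈ H := hcH
      rwa [← hker, MonoidHom.mem_ker] at this
    have step1 : ∀ s ∈ Subgroup.closure {a, b},
        Commute (π a) (π s) ∧ Commute (π b) (π s) := by
      intro s hs
      have hsub : Subgroup.closure {a, b} ≤
          Subgroup.comap π (Subgroup.centralizer {π a} ⊓ Subgroup.centralizer {π b}) := by
        apply Subgroup.closure_le _ |>.mpr
        intro t ht
        simp only [Set.mem_insert_iff, Set.mem_singleton_iff] at ht
        rcases ht with rfl | rfl
        · constructor
          · exact Subgroup.mem_centralizer_iff.mpr (by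
              intro g hg; rw [Set.mem_singleton_iff] at hg; subst hg; rfl)
          · exact Subgroup.mem_centralizer_iff.mpr (by
              intro g hg; rw [Set.mem_singleton_iff] at hg; subst hg; exact hπc.symm)
        · constructor
          · exact Subgroup.mem_centralizer_iff.mpr (by
              intro g hg; rw [Set.mem_singleton_iff] at hg; subst hg; exact hπc)
          · exact Subgroup.mem_centralizer_iff.mpr (by
              intro g hg; rw [Set.mem_singleton_iff] at hg; subst hg; rfl)
      have := hsub hs
      rw [Subgroup.mem_comap, Subgroup.mem_inf] at this
      exact ⟨Subgroup.mem_centralizer_iff.mp this.1 (π a) rfl,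
        Subgroup.mem_centralizer_iff.mp this.2 (π b) rfl⟩
    have pcomm : ∀ s ∈ Subgroup.closure {a, b}, ∀ t ∈ Subgroup.closure {a, b},
        Commute (π s) (π t) := by
      intro s hs t ht
      have hsub : Subgroup.closure {a, b} ≤ Subgroup.comap π (Subgroup.centralizer {π s}) := by
        apply Subgroup.closure_le _ |>.mpr
        intro w hw
        simp only [Set.mem_insert_iff, Set.mem_singleton_iff] at hw
        rcases hw with rfl | rfl
        · exact Subgroup.mem_centralizer_iff.mpr (by
            intro g hg; rw [Set.mem_singleton_iff] at hg; subst hg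
            exact ((step1 s hs).1).symm)
        · exact Subgroup.mem_centralizer_iff.mpr (by
            intro g hg; rw [Set.mem_singleton_iff] at hg; subst hg
            exact ((step1 s hs).2).symm)
      have := hsub ht
      rw [Subgroup.mem_comap] at this
      exact Subgroup.mem_centralizer_iff.mp this (π s) rfl
    -- decompose x and y
    have hdecomp : ∀ z : G, ∃ m ∈ Subgroup.closure {a, b},
        ∃ u ∈ lowerCentralSeries G 1, m * u = z := by
      intro z
      have hz : z ∈ Subgroup.closure {a, b} ⊔ lowerCentralSeries G 1 := by
        rw [lowerCentralSeries_one, hgen]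
        exact mem_top z
      rw [← SetLike.mem_coe, Subgroup.mul_normal] at hz
      obtain ⟨m, hm, u, hu, h⟩ := hz
      exact ⟨m, hm, u, hu, h⟩
    apply hcommH
    obtain ⟨m, hm, u, hu, rfl⟩ := hdecomp x
    obtain ⟨m', hm', v, hv, rfl⟩ := hdecomp y
    rw [map_mul, map_mul]
    have h1 : Commute (π u) (π m' * π v) := by
      rw [← map_mul]
      exact hcentral u hu _
    have h2 : Commute (π m) (π m') := pcomm m hm m' hm'
    have h3 : Commute (π m) (π v) := (hcentral v hv m).symm
    exact (h2.mul_right h3).mul_left h1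
  -- ⁅H, H⁆ ≤ L4
  have hHH : ⁅H, H⁆ ≤ lowerCentralSeries G 4 := by
    rw [Subgroup.commutator_le]
    intro x hx y hy
    let π := QuotientGroup.mk' (lowerCentralSeries G 4)
    have hker : π.ker = lowerCentralSeries G 4 := QuotientGroup.ker_mk' _
    suffices hsuf : Commute (π x) (π y) by
      have : π ⁅x, y⁆ = 1 := by
        rw [map_commutatorElement]
        exact commutatorElement_eq_one_iff_commute.mpr hsuf
      rwa [← MonoidHom.mem_ker, hker] at this
    have hL21 : ⁅lowerCentralSeries G 2, lowerCentralSeries G 1⁆ ≤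
        lowerCentralSeries G 4 := lcs_comm G 1 2
    have hcent2 : ∀ u ∈ lowerCentralSeries G 2, ∀ z ∈ lowerCentralSeries G 1,
        Commute (π u) (π z) := by
      intro u hu z hz
      rw [← commutatorElement_eq_one_iff_commute, ← map_commutatorElement,
        ← MonoidHom.mem_ker (f := π), hker]
      exact hL21 (Subgroup.commutator_mem_commutator hu hz)
    have hdecompH : ∀ z : G, z ∈ H → ∃ k : ℤ, ∃ u ∈ lowerCentralSeries G 2,
        c ^ k * u = z := by
      intro z hz
      rw [hH, ← SetLike.mem_coe, Subgroup.mul_normal] at hz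
      obtain ⟨y', hy', u, hu, h⟩ := hz
      obtain ⟨k, rfl⟩ := Subgroup.mem_zpowers_iff.mp hy'
      exact ⟨k, u, hu, h⟩
    obtain ⟨k, u, hu, rfl⟩ := hdecompH x hx
    obtain ⟨l, v, hv, rfl⟩ := hdecompH y hy
    have hckL1 : ∀ j : ℤ, c ^ j ∈ lowerCentralSeries G 1 :=
      fun j => Subgroup.zpow_mem _ hcL1 j
    have hvL1 : v ∈ lowerCentralSeries G 1 :=
      lowerCentralSeries_antitone (⊤ : Subgroup G) (by omega) hv
    rw [map_mul, map_mul]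
    have h1 : Commute (π u) (π (c ^ l) * π v) := by
      rw [← map_mul]
      have : c ^ l * v ∈ lowerCentralSeries G 1 :=
        (lowerCentralSeries G 1).mul_mem (hckL1 l) hvL1
      exact ((hcent2 u hu _ this))
    have h2 : Commute (π (c ^ k)) (π (c ^ l)) := by
      rw [map_zpow, map_zpow]
      exact (Commute.refl (π c)).zpow_zpow k l
    have h3 : Commute (π (c ^ k)) (π v) := (hcent2 v hv _ (hckL1 k)).symm
    exact (h2.mul_right h3).mul_left h1
  have hfinal : derivedSeries G 2 ≤ lowerCentralSeries G 4 := by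
    have hd1 : derivedSeries G 1 ≤ H :=
      (derived_le_lower_central 1).trans hG'H
    calc derivedSeries G 2 = ⁅derivedSeries G 1, derivedSeries G 1⁆ := derivedSeries_succ G 1
      _ ≤ ⁅H, H⁆ := Subgroup.commutator_mono hd1 hd1
      _ ≤ lowerCentralSeries G 4 := hHH
  -- counting
  have h4ne : lowerCentralSeries G 4 ≠ ⊥ := by
    intro h
    exact hds (le_bot_iff.mp (hfinal.trans h.le))
  have hstab : ∀ k : ℕ, k ≤ 4 →
      lowerCentralSeries G (k + 1) ≠ lowerCentralSeries G k := by
    intro k hk heq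
    have hconst : ∀ m : ℕ, lowerCentralSeries G (k + m) = lowerCentralSeries G k := by
      intro m
      induction m with
      | zero => rfl
      | succ m ih =>
        have : k + (m + 1) = (k + m) + 1 := by omega
        rw [this, lowerCentralSeries_succ, ih, ← lowerCentralSeries_succ, heq]
    obtain ⟨n0, hn0⟩ := nilpotent_iff_lowerCentralSeries.mp hnil
    have hkbot : lowerCentralSeries G k = ⊥ := by
      rw [← hconst n0]
      apply le_bot_iff.mp
      rw [← hn0]
      exact lowerCentralSeries_antitone (⊤ : Subgroup G) (by omega)
    exact h4ne (le_bot_iff.mp (hkbot ▸ lowerCentralSeries_antitone (⊤ : Subgroup G) hk))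
  have hdouble : ∀ k : ℕ, k ≤ 3 →
      2 * Nat.card (lowerCentralSeries G (k + 1)) ≤ Nat.card (lowerCentralSeries G k) := by
    intro k hk
    have hle : lowerCentralSeries G (k + 1) ≤ lowerCentralSeries G k :=
      lowerCentralSeries_antitone (⊤ : Subgroup G) (by omega)
    have hne : lowerCentralSeries G (k + 1) ≠ lowerCentralSeries G k := hstab k (by omega)
    obtain ⟨d, hd⟩ := Subgroup.card_dvd_of_le hle
    have hpos : 0 < Nat.card (lowerCentralSeries G (k + 1)) := Nat.card_pos
    have hd2 : 2 ≤ d := by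
      rcases Nat.lt_or_ge d 2 with h | h
      · interval_cases d
        · rw [mul_zero] at hd
          have : 0 < Nat.card (lowerCentralSeries G k) := Nat.card_pos
          omega
        · rw [mul_one] at hd
          exact absurd (Subgroup.eq_of_le_of_card_ge hle (le_of_eq hd)) hne
      · exact h
    calc 2 * Nat.card (lowerCentralSeries G (k + 1))
        = Nat.card (lowerCentralSeries G (k + 1)) * 2 := mul_comm _ _
      _ ≤ Nat.card (lowerCentralSeries G (k + 1)) * d :=
          Nat.mul_le_mul_left _ hd2
      _ = Nat.card (lowerCentralSeries G k) := hd.symm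
  have h4card : 2 ≤ Nat.card (lowerCentralSeries G 4) :=
    (Subgroup.one_lt_card_iff_ne_bot _).mpr h4ne
  have hL1card : 16 ≤ Nat.card (lowerCentralSeries G 1) := by
    have c3 : 2 * Nat.card (lowerCentralSeries G 4) ≤ Nat.card (lowerCentralSeries G 3) :=
      hdouble 3 (by omega)
    have c2 : 2 * Nat.card (lowerCentralSeries G 3) ≤ Nat.card (lowerCentralSeries G 2) :=
      hdouble 2 (by omega)
    have c1 : 2 * Nat.card (lowerCentralSeries G 2) ≤ Nat.card (lowerCentralSeries G 1) :=
      hdouble 1 (by omega)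
    omega
  have habcard : Nat.card (G ⧸ lowerCentralSeries G 1) = 16 := by
    rw [lowerCentralSeries_one]
    have h1 : Nat.card (G ⧸ commutator G) = Nat.card (Abelianization G) := rfl
    rw [h1, Nat.card_congr e.toEquiv, Nat.card_congr Multiplicative.toAdd, Nat.card_prod,
      Nat.card_zmod]
  have hcardeq := Subgroup.card_eq_card_quotient_mul_card_subgroup (lowerCentralSeries G 1)
  rw [habcard] at hcardeq
  omega



set_option maxRecDepth 40000
set_option maxHeartbeats 4000000

private abbrev GA : Type := Multiplicative (ZMod 4 × ZMod 4)
private abbrev GT : Type := Multiplicative (ZMod 4)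

private def muAdd : ZMod 4 × ZMod 4 ≃+ ZMod 4 × ZMod 4 where
  toFun p := (p.2, p.1 + 2 * p.2)
  invFun p := (p.2 - 2 * p.1, p.1)
  left_inv := by decide
  right_inv := by decide
  map_add' := by decide

private def mu : MulAut GA := AddEquiv.toMultiplicative muAdd

private theorem mu_key : ∀ (x y : ZMod 4) (a : GA),
    (mu ^ (x + y).val) a = (mu ^ x.val) ((mu ^ y.val) a) := by decide

private def phi2 : GT →* MulAut GA where
  toFun s := mu ^ (Multiplicative.toAdd s).val
  map_one' := pow_zero mu
  map_mul' x y := MulEquiv.ext (mu_key (Multiplicative.toAdd x) (Multiplicative.toAdd y))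

private abbrev GN : Type := SemidirectProduct GA GT phi2

private instance : DecidableEq GN := fun x y =>
  match x, y with
  | ⟨a, b⟩, ⟨c, d⟩ => decidable_of_iff (a = c ∧ b = d)
      ⟨fun ⟨h1, h2⟩ => by rw [h1, h2], fun h => by injection h with h1 h2; exact ⟨h1, h2⟩⟩

private def eqvGN : GA × GT ≃ GN where
  toFun p := ⟨p.1, p.2⟩
  invFun g := (g.left, g.right)
  left_inv p := rfl
  right_inv g := by cases g; rfl

private instance : Fintype GN := Fintype.ofEquiv _ eqvGN

private def nE (p : ZMod 4 × ZMod 4) (s : ZMod 4) : GN :=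
  ⟨Multiplicative.ofAdd p, Multiplicative.ofAdd s⟩

private def alphaFun (n : GN) : GN :=
  nE (0, 1) 0 ^ (Multiplicative.toAdd n.left).1.val *
    nE (1, 0) 0 ^ (Multiplicative.toAdd n.left).2.val *
    nE (0, 1) 3 ^ (Multiplicative.toAdd n.right).val

private def betaFun (n : GN) : GN :=
  nE (0, 1) 0 ^ (Multiplicative.toAdd n.left).1.val *
    nE (1, 0) 0 ^ (Multiplicative.toAdd n.left).2.val *
    nE (2, 1) 3 ^ (Multiplicative.toAdd n.right).val

private theorem alpha_li : ∀ n : GN, betaFun (alphaFun n) = n := by decide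
private theorem alpha_ri : ∀ n : GN, alphaFun (betaFun n) = n := by decide
private theorem alpha_mul : ∀ a b : GN, alphaFun (a * b) = alphaFun a * alphaFun b := by decide

private def alpha : MulAut GN where
  toFun := alphaFun
  invFun := betaFun
  left_inv := alpha_li
  right_inv := alpha_ri
  map_mul' := alpha_mul

private theorem alpha_key : ∀ (x y : ZMod 4) (n : GN),
    (alpha ^ (x + y).val) n = (alpha ^ x.val) ((alpha ^ y.val) n) := by decide

private def phi : GT →* MulAut GN where
  toFun s := alpha ^ (Multiplicative.toAdd s).val
  map_one' := pow_zero alpha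
  map_mul' x y := MulEquiv.ext (alpha_key (Multiplicative.toAdd x) (Multiplicative.toAdd y))

private abbrev GG : Type := SemidirectProduct GN GT phi

private instance : DecidableEq GG := fun x y =>
  match x, y with
  | ⟨a, b⟩, ⟨c, d⟩ => decidable_of_iff (a = c ∧ b = d)
      ⟨fun ⟨h1, h2⟩ => by rw [h1, h2], fun h => by injection h with h1 h2; exact ⟨h1, h2⟩⟩

private def eqvGG : GN × GT ≃ GG where
  toFun p := ⟨p.1, p.2⟩
  invFun g := (g.left, g.right)
  left_inv p := rfl
  right_inv g := by cases g; rfl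

private instance : Fintype GG := Fintype.ofEquiv _ eqvGG

-- the abelianization hom
private def g1 : GA →* GA :=
  AddMonoidHom.toMultiplicative ⟨⟨fun p => (0, 2 * p.1 + 2 * p.2), by decide⟩, by decide⟩

private def g2 : GT →* GA :=
  AddMonoidHom.toMultiplicative ⟨⟨fun s => ((0 : ZMod 4), s), by decide⟩, by decide⟩

private theorem compat1_key : ∀ (s : GT) (a : GA),
    g1 ((phi2 s) a) = (MulAut.conj (g2 s)) (g1 a) := by decide

private def f1 : GN →* GA :=
  SemidirectProduct.lift g1 g2 (fun s => MonoidHom.ext (compat1_key s))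

private def f2 : GT →* GA :=
  AddMonoidHom.toMultiplicative ⟨⟨fun k => (k, (0 : ZMod 4)), by decide⟩, by decide⟩

private theorem compat2_key : ∀ (k : GT) (n : GN),
    f1 ((phi k) n) = (MulAut.conj (f2 k)) (f1 n) := by decide

private def psi : GG →* GA :=
  SemidirectProduct.lift f1 f2 (fun k => MonoidHom.ext (compat2_key k))

-- subgroups
private def KNP (n : GN) : Prop :=
  Multiplicative.toAdd n.right =
    2 * ((Multiplicative.toAdd n.left).1 + (Multiplicative.toAdd n.left).2)

private instance : DecidablePred KNP := fun n => by unfold KNP; infer_instance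

private theorem KN_mul : ∀ a b : GN, KNP a → KNP b → KNP (a * b) := by decide
private theorem KN_inv : ∀ a : GN, KNP a → KNP a⁻¹ := by decide

private def KN : Subgroup GN where
  carrier := {n | KNP n}
  one_mem' := by decide
  mul_mem' := fun {a b} ha hb => KN_mul a b ha hb
  inv_mem' := fun {a} ha => KN_inv a ha

private def k0 : GN := nE (2, 2) 0

private theorem K2_mul : ∀ a b : GN, (a = 1 ∨ a = k0) → (b = 1 ∨ b = k0) →
    (a * b = 1 ∨ a * b = k0) := by decide
private theorem K2_inv : ∀ a : GN, (a = 1 ∨ a = k0) → (a⁻¹ = 1 ∨ a⁻¹ = k0) := by decide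

private def K2 : Subgroup GN where
  carrier := {n | n = 1 ∨ n = k0}
  one_mem' := Or.inl rfl
  mul_mem' := fun {a b} ha hb => K2_mul a b ha hb
  inv_mem' := fun {a} ha => K2_inv a ha

-- explicit commutators
private def ge1 : GG := ⟨nE (1, 0) 0, 1⟩
private def ge2 : GG := ⟨nE (0, 1) 0, 1⟩
private def gt : GG := ⟨nE (0, 0) 1, 1⟩
private def gc : GG := ⟨1, Multiplicative.ofAdd 1⟩

private theorem hgen1 : SemidirectProduct.inl (nE (0, 1) 2) = ⁅gc, gt⁆ := by decide
private theorem hgen2 : SemidirectProduct.inl (nE (0, 2) 0) = ⁅ge1, gt * gc⁆ := by decide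
private theorem hgen3 : SemidirectProduct.inl (nE (1, 0) 2) = ⁅gt, ge2 * gc⁆ := by decide

private theorem word_key : ∀ n : GN, KNP n → ∃ i j k : Fin 4,
    n = nE (0, 1) 2 ^ (i : ℕ) * nE (0, 2) 0 ^ (j : ℕ) * nE (1, 0) 2 ^ (k : ℕ) := by decide

private theorem ker_key : ∀ (n : GN) (k : GT),
    (f1 n * f2 k = 1) ↔ (k = 1 ∧ KNP n) := by decide

private theorem surj_key : ∀ m : GA, ∃ i j : Fin 4,
    f2 (Multiplicative.ofAdd (1 : ZMod 4)) ^ (i : ℕ) *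
      g2 (Multiplicative.ofAdd (1 : ZMod 4)) ^ (j : ℕ) = m := by decide

private theorem KK_le : ∀ a b : GN, KNP a → KNP b → (⁅a, b⁆ = 1 ∨ ⁅a, b⁆ = k0) := by decide
private theorem k0_comm : k0 = ⁅nE (0, 1) 2, nE (1, 0) 2⁆ := by decide
private theorem k1_mem : KNP (nE (0, 1) 2) := by decide
private theorem k2_mem : KNP (nE (1, 0) 2) := by decide
private theorem K2K2 : ∀ a b : GN, (a = 1 ∨ a = k0) → (b = 1 ∨ b = k0) → ⁅a, b⁆ = 1 := by decide
private theorem k0_ne_one : SemidirectProduct.inl (φ := phi) k0 ≠ 1 := by decide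

private theorem psi_apply (x : GG) : psi x = f1 x.left * f2 x.right := rfl

private theorem hker_eq : psi.ker = Subgroup.map (SemidirectProduct.inl) KN := by
  ext x
  rw [MonoidHom.mem_ker, Subgroup.mem_map]
  constructor
  · intro hx
    rw [psi_apply] at hx
    obtain ⟨h1, h2⟩ := (ker_key x.left x.right).mp hx
    refine ⟨x.left, h2, ?_⟩
    cases x with
    | mk l r =>
      simp only at h1
      rw [h1]
      rfl
  · rintro ⟨n, hn, rfl⟩
    rw [psi_apply]
    exact (ker_key _ _).mpr ⟨rfl, hn⟩

private theorem hsurj : Function.Surjective psi := by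
  intro m
  obtain ⟨i, j, hm⟩ := surj_key m
  refine ⟨(SemidirectProduct.inr (Multiplicative.ofAdd 1)) ^ (i : ℕ) *
    (SemidirectProduct.inl (SemidirectProduct.inr (Multiplicative.ofAdd 1))) ^ (j : ℕ), ?_⟩
  rw [map_mul, map_pow, map_pow]
  have e1 : psi (SemidirectProduct.inr (Multiplicative.ofAdd 1)) =
      f2 (Multiplicative.ofAdd 1) := SemidirectProduct.lift_inr _ _ _ _
  have e2 : psi (SemidirectProduct.inl (SemidirectProduct.inr (Multiplicative.ofAdd 1))) =
      g2 (Multiplicative.ofAdd 1) := by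
    have e3 : psi (SemidirectProduct.inl (SemidirectProduct.inr (Multiplicative.ofAdd 1))) =
        f1 (SemidirectProduct.inr (Multiplicative.ofAdd 1)) := SemidirectProduct.lift_inl _ _ _ _
    rw [e3]
    exact SemidirectProduct.lift_inr _ _ _ _
  rw [e1, e2]
  exact hm

private theorem hd1 : derivedSeries GG 1 = Subgroup.map (SemidirectProduct.inl) KN := by
  apply le_antisymm
  · rw [← hker_eq]
    have : derivedSeries GG 1 = ⁅(⊤ : Subgroup GG), ⊤⁆ := by
      rw [derivedSeries_succ, derivedSeries_zero]
    rw [this, Subgroup.commutator_le]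
    intro g _ h _
    rw [MonoidHom.mem_ker, map_commutatorElement]
    exact commutatorElement_eq_one_iff_commute.mpr (mul_comm _ _)
  · intro x hx
    obtain ⟨n, hn, rfl⟩ := Subgroup.mem_map.mp hx
    obtain ⟨i, j, k, rfl⟩ := word_key n hn
    have hmem : ∀ u v : GG, ⁅u, v⁆ ∈ derivedSeries GG 1 := by
      intro u v
      rw [derivedSeries_succ]
      exact Subgroup.commutator_mem_commutator
        (by rw [derivedSeries_zero]; exact Subgroup.mem_top u)
        (by rw [derivedSeries_zero]; exact Subgroup.mem_top v)
    rw [map_mul, map_mul, map_pow, map_pow, map_pow, hgen1, hgen2, hgen3]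
    exact mul_mem (mul_mem (pow_mem (hmem _ _) _) (pow_mem (hmem _ _) _))
      (pow_mem (hmem _ _) _)

private theorem hKK : ⁅KN, KN⁆ = K2 := by
  apply le_antisymm
  · rw [Subgroup.commutator_le]
    intro a ha b hb
    exact KK_le a b ha hb
  · intro x hx
    rcases hx with rfl | rfl
    · exact one_mem _
    · rw [k0_comm]
      exact Subgroup.commutator_mem_commutator k1_mem k2_mem

private theorem hd2 : derivedSeries GG 2 = Subgroup.map (SemidirectProduct.inl) K2 := by
  rw [derivedSeries_succ, hd1, ← Subgroup.map_commutator, hKK]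

private theorem hd3 : derivedSeries GG 3 = ⊥ := by
  have hK2bot : ⁅K2, K2⁆ = ⊥ := by
    rw [eq_bot_iff]
    rw [Subgroup.commutator_le]
    intro a ha b hb
    rw [Subgroup.mem_bot]
    exact K2K2 a b ha hb
  rw [derivedSeries_succ, hd2, ← Subgroup.map_commutator, hK2bot, Subgroup.map_bot]

private theorem hd2ne : derivedSeries GG 2 ≠ ⊥ := by
  rw [hd2]
  intro h
  have hmem : SemidirectProduct.inl (φ := phi) k0 ∈ Subgroup.map (SemidirectProduct.inl) K2 :=
    Subgroup.mem_map.mpr ⟨k0, Or.inr rfl, rfl⟩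
  rw [h, Subgroup.mem_bot] at hmem
  exact k0_ne_one hmem

private theorem hcardGG : Nat.card GG = 256 := by
  rw [Nat.card_congr eqvGG.symm, Nat.card_prod, Nat.card_congr eqvGN.symm, Nat.card_prod]
  rw [Nat.card_congr Multiplicative.toAdd, Nat.card_congr (Multiplicative.toAdd (α := ZMod 4))]
  rw [Nat.card_prod, Nat.card_zmod]

private theorem hcomm_eq : commutator GG = psi.ker := by
  have h1 : commutator GG = derivedSeries GG 1 := rfl
  rw [h1, hd1, hker_eq]

private noncomputable def abelGG : Abelianization GG ≃* GA :=
  (QuotientGroup.quotientMulEquivOfEq hcomm_eq).trans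
    (QuotientGroup.quotientKerEquivOfSurjective psi hsurj)

universe u

private def UG : Type u := ULift.{u} GG

private instance : Group UG := inferInstanceAs (Group (ULift GG))

private def eU : UG ≃* GG := MulEquiv.ulift

private theorem hdU (n : ℕ) :
    derivedSeries UG n = Subgroup.map eU.symm.toMonoidHom (derivedSeries GG n) :=
  (map_derivedSeries_eq (f := eU.symm.toMonoidHom) eU.symm.surjective n).symm

private theorem hd3U : derivedSeries UG 3 = ⊥ := by
  rw [hdU, hd3, Subgroup.map_bot]

private theorem hd2neU : derivedSeries UG 2 ≠ ⊥ := by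
  rw [hdU]
  intro h
  rw [Subgroup.map_eq_bot_iff] at h
  have hker : eU.symm.toMonoidHom.ker = ⊥ :=
    (MonoidHom.ker_eq_bot_iff _).mpr (eU.symm.injective)
  rw [hker, le_bot_iff] at h
  exact hd2ne h

private theorem hcardU : Nat.card UG = 256 := by
  rw [Nat.card_congr eU.toEquiv]
  exact hcardGG

private noncomputable def abelU : Abelianization UG ≃* GA := by
  have hcommU : commutator UG = (psi.comp eU.toMonoidHom).ker := by
    have h1 : commutator UG = derivedSeries UG 1 := rfl
    rw [h1, hdU, hd1, hker_eq.symm]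
    ext x
    rw [Subgroup.mem_map, MonoidHom.mem_ker, MonoidHom.comp_apply, ← MonoidHom.mem_ker]
    constructor
    · rintro ⟨y, hy, rfl⟩
      simpa using hy
    · intro hx
      exact ⟨eU x, hx, by simp⟩
  exact (QuotientGroup.quotientMulEquivOfEq hcommU).trans
    (QuotientGroup.quotientKerEquivOfSurjective _
      (hsurj.comp eU.surjective))

private theorem part2 : ∃ (G : GrpCat.{u}), Nat.card G = 256 ∧
    Nonempty (Abelianization G ≃* Multiplicative (ZMod 4 × ZMod 4)) ∧
    derivedSeries G 3 = ⊥ ∧ derivedSeries G 2 ≠ ⊥ :=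
  ⟨GrpCat.of UG, hcardU, ⟨abelU⟩, hd3U, hd2neU⟩


theorem stmt5 :
    (∀ (G : Type) [Group G] [Finite G], (∃ n : ℕ, Nat.card G = 2 ^ n) →
      Nat.card G ≤ 128 →
      Nonempty (Abelianization G ≃* Multiplicative (ZMod 4 × ZMod 4)) →
      derivedSeries G 2 = ⊥) ∧
    (∃ (G : GrpCat), Nat.card G = 256 ∧
      Nonempty (Abelianization G ≃* Multiplicative (ZMod 4 × ZMod 4)) ∧
      derivedSeries G 3 = ⊥ ∧ derivedSeries G 2 ≠ ⊥) ∧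
    (∀ (G : Type) [Group G] [Finite G], (∃ n : ℕ, Nat.card G = 2 ^ n) →
      Nonempty (Abelianization G ≃* Multiplicative (ZMod 4 × ZMod 4)) →
      derivedSeries G 2 ≠ ⊥ → 256 ≤ Nat.card G) := by
  refine ⟨?_, part2, ?_⟩
  · intro G _ _ hpow hle hab
    by_contra hne
    have := keybound G hpow hab hne
    omega
  · intro G _ _ hpow hab hne
    exact keybound G hpow hab hne
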